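/- Let B_g^{(1)} be the group of affine Z/2-valued functions on Ω_g, with special element the constant function \overline{1}, and let A_1(B_g^{(1)}, \overline{1}) be the abelian group generated by Y[z_1,z_2,z_3] (z_i ∈ B_g^{(1)}) modulo cyclic invariance, antisymmetry, multilinearity in each entry, and the slide relation Y[z,z,w] = Y[\overline{1},z,w]. Then the map γ sending Y[z_1,z_2,z_3] to the product z_1 z_2 z_3 is a well-defined isomorphism from A_1(B_g^{(1)}, \overline{1}) onto B_g^{(3)}, the space of Boolean polynomials of degree at most 3. -/

import Mathlib

/-- `H_(2) = H ⊗ ℤ/2 = (ℤ/2)^{2g}`, with basis indexed by `Fin g ⊕ Fin g`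
(`Sum.inl i = x_i`, `Sum.inr i = y_i`). -/
abbrev H2 (g : ℕ) := Fin g ⊕ Fin g → ZMod 2

/-- The mod-2 symplectic intersection form on `H_(2)`. -/
def bsym (g : ℕ) (a b : H2 g) : ZMod 2 :=
  ∑ i : Fin g, (a (Sum.inl i) * b (Sum.inr i) + a (Sum.inr i) * b (Sum.inl i))

/-- A quadratic form refining the mod-2 symplectic form. -/
def IsQuad (g : ℕ) (q : H2 g → ZMod 2) : Prop :=
  ∀ a b, q (a + b) = q a + q b + bsym g a b

/-- `Ω_g`, the set of quadratic refinements of the mod-2 symplectic form. -/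
abbrev Om (g : ℕ) := {q : H2 g → ZMod 2 // IsQuad g q}
/-- The evaluation function `\overline{h} : Ω_g → ℤ/2`, `q ↦ q(h)`. -/
def ovh (g : ℕ) (h : H2 g) : Om g → ZMod 2 := fun q => q.1 h

/-- The set of affine functions `\overline{h} + ε·\overline{1}` on `Ω_g`. -/
def Aff (g : ℕ) : Set (Om g → ZMod 2) :=
  {f | ∃ (h : H2 g) (ε : ZMod 2), f = fun q => q.1 h + ε}

/-- `B_g^{(k)}`: the space of Boolean polynomials of degree at most `k`, i.e. the span of
products of at most `k` affine functions. -/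
def Bk (g k : ℕ) : Submodule (ZMod 2) (Om g → ZMod 2) :=
  Submodule.span (ZMod 2)
    {f | ∃ l : List (Om g → ZMod 2), l.length ≤ k ∧ (∀ x ∈ l, x ∈ Aff g) ∧ f = l.prod}

/-- The relations defining `A_1(G,s)`: cyclic invariance, antisymmetry, multilinearity,
and the slide relation `Y[z,z,w] = Y[s,z,w]`. -/
def YRel (G : Type*) [AddCommGroup G] (s : G) : Set (FreeAbelianGroup (G × G × G)) :=
  {x | ∃ z₁ z₂ z₃ : G, x = FreeAbelianGroup.of (z₁, z₂, z₃)
        - FreeAbelianGroup.of (z₂, z₃, z₁)} ∪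
  {x | ∃ z₁ z₂ z₃ : G, x = FreeAbelianGroup.of (z₁, z₂, z₃)
        + FreeAbelianGroup.of (z₂, z₁, z₃)} ∪
  {x | ∃ z₀ z₁ z₂ z₃ : G, x = FreeAbelianGroup.of (z₀ + z₁, z₂, z₃)
        - FreeAbelianGroup.of (z₀, z₂, z₃) - FreeAbelianGroup.of (z₁, z₂, z₃)} ∪
  {x | ∃ z₁ z₂ : G, x = FreeAbelianGroup.of (z₁, z₁, z₂)
        - FreeAbelianGroup.of (s, z₁, z₂)}

/-- The abelian group `A_1(G,s)`, generated by symbols `Y[z₁,z₂,z₃]` (`zᵢ ∈ G`) modulo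
cyclic invariance, antisymmetry, multilinearity and the slide relation. -/
def A1 (G : Type*) [AddCommGroup G] (s : G) :=
  FreeAbelianGroup (G × G × G) ⧸ AddSubgroup.closure (YRel G s)

instance (G : Type*) [AddCommGroup G] (s : G) : AddCommGroup (A1 G s) :=
  QuotientAddGroup.Quotient.addCommGroup _

/-- The generator `Y[z₁,z₂,z₃]` of `A_1(G,s)`. -/
def Ygen {G : Type*} [AddCommGroup G] (s : G) (z₁ z₂ z₃ : G) : A1 G s :=
  QuotientAddGroup.mk' _ (FreeAbelianGroup.of (z₁, z₂, z₃))

/-- The constant function `\overline{1}` as an element of `B_g^{(1)}` (the empty product). -/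
def ov1B (g : ℕ) : Bk g 1 :=
  ⟨(fun _ => 1), Submodule.subset_span ⟨[], by simp, by simp, rfl⟩⟩

namespace A1B3aux

lemma z2_cases : ∀ c : ZMod 2, c = 0 ∨ c = 1 := by decide

lemma z2_add_self : ∀ x : ZMod 2, x + x = 0 := by decide

lemma quad_zero {g : ℕ} (q : Om g) : q.1 0 = 0 := by
  have := q.2 0 0
  simp only [add_zero, bsym] at this
  · have h0 : bsym g 0 0 = 0 := by simp [bsym]
    have := q.2 0 0
    rw [h0, add_zero, add_zero] at this
    have h2 := congrArg (fun x => x - q.1 0) this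
    simpa using h2.symm

lemma bsym_add_right {g : ℕ} (c a b : H2 g) :
    bsym g c (a + b) = bsym g c a + bsym g c b := by
  unfold bsym
  rw [← Finset.sum_add_distrib]
  exact Finset.sum_congr rfl fun i _ => by simp [Pi.add_apply]; ring

lemma aff_add {g : ℕ} {f f' : Om g → ZMod 2} (hf : f ∈ Aff g) (hf' : f' ∈ Aff g) :
    f + f' ∈ Aff g := by
  obtain ⟨h, ε, rfl⟩ := hf
  obtain ⟨h', ε', rfl⟩ := hf'
  refine ⟨h + h', ε + ε' + bsym g h h', ?_⟩
  funext q
  have := q.2 h h'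
  simp only [Pi.add_apply, this]
  have h2 : (2 : ZMod 2) = 0 := by decide
  ring_nf
  rw [h2]
  ring

lemma aff_zero {g : ℕ} : (0 : Om g → ZMod 2) ∈ Aff g :=
  ⟨0, 0, by funext q; simp [quad_zero q]⟩

lemma aff_one {g : ℕ} : (fun _ => (1 : ZMod 2)) ∈ Aff g :=
  ⟨0, 1, by funext q; simp [quad_zero q]⟩

/-- `Aff` as a submodule. -/
def AffSub (g : ℕ) : Submodule (ZMod 2) (Om g → ZMod 2) where
  carrier := Aff g
  add_mem' := aff_add
  zero_mem' := aff_zero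
  smul_mem' := by
    intro c x hx
    rcases z2_cases c with rfl | rfl
    · simpa using aff_zero
    · simpa using hx

lemma Bk1_eq_AffSub (g : ℕ) : Bk g 1 = AffSub g := by
  apply le_antisymm
  · apply Submodule.span_le.2
    rintro f ⟨l, hl, hmem, rfl⟩
    match l, hl with
    | [], _ => simpa [AffSub] using (show (1 : Om g → ZMod 2) ∈ Aff g from aff_one)
    | [a], _ => simpa [AffSub] using hmem a (by simp)
  · intro x hx
    exact Submodule.subset_span ⟨[x], by simp, by simpa [AffSub] using hx, by simp⟩

lemma coe_mem_aff {g : ℕ} (z : Bk g 1) : (z : Om g → ZMod 2) ∈ Aff g :=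
  (le_of_eq (Bk1_eq_AffSub g)) z.2

lemma mem_Bk1 {g : ℕ} (z : Bk g 1) : ∃ h ε, (z : Om g → ZMod 2) = fun q => q.1 h + ε :=
  coe_mem_aff z

lemma aff_mem_Bk1 {g : ℕ} {f : Om g → ZMod 2} (hf : f ∈ Aff g) : f ∈ Bk g 1 := by
  rw [Bk1_eq_AffSub]; exact hf

lemma mul3_mem {g : ℕ} (z₁ z₂ z₃ : Bk g 1) :
    (z₁ : Om g → ZMod 2) * z₂ * z₃ ∈ Bk g 3 := by
  have h1 := coe_mem_aff z₁
  have h2 := coe_mem_aff z₂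
  have h3 := coe_mem_aff z₃
  exact Submodule.subset_span ⟨[z₁, z₂, z₃], by simp, by
    intro x hx; simp at hx; rcases hx with rfl | rfl | rfl <;> assumption, by
    simp [List.prod]; ring⟩

/-- the product of three elements of `Bk g 1`, as an element of `Bk g 3`. -/
def mul3 {g : ℕ} (z₁ z₂ z₃ : Bk g 1) : Bk g 3 :=
  ⟨(z₁ : Om g → ZMod 2) * z₂ * z₃, mul3_mem z₁ z₂ z₃⟩

end A1B3aux
namespace A1B3aux

section rels
variable {G : Type*} [AddCommGroup G] (s : G)

lemma mk_eq_mk {x y : FreeAbelianGroup (G × G × G)}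
    (h : x - y ∈ AddSubgroup.closure (YRel G s)) :
    (QuotientAddGroup.mk' (AddSubgroup.closure (YRel G s)) x : A1 G s)
      = QuotientAddGroup.mk' _ y := by
  rw [QuotientAddGroup.mk'_eq_mk']
  exact ⟨-(x - y), neg_mem h, by abel⟩

lemma Ycyc (z₁ z₂ z₃ : G) : Ygen s z₁ z₂ z₃ = Ygen s z₂ z₃ z₁ :=
  mk_eq_mk s (AddSubgroup.subset_closure (Or.inl (Or.inl (Or.inl ⟨z₁, z₂, z₃, rfl⟩))))

lemma Yanti (z₁ z₂ z₃ : G) : Ygen s z₁ z₂ z₃ = - Ygen s z₂ z₁ z₃ := by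
  have h : (QuotientAddGroup.mk' (AddSubgroup.closure (YRel G s))
      (FreeAbelianGroup.of (z₁, z₂, z₃) + FreeAbelianGroup.of (z₂, z₁, z₃)) : A1 G s) = 0 := by
    have := mk_eq_mk s (x := FreeAbelianGroup.of (z₁, z₂, z₃) + FreeAbelianGroup.of (z₂, z₁, z₃))
      (y := 0) (by
        rw [sub_zero]
        exact AddSubgroup.subset_closure (Or.inl (Or.inl (Or.inr ⟨z₁, z₂, z₃, rfl⟩))))
    rw [this, map_zero]
  have := (QuotientAddGroup.mk' (AddSubgroup.closure (YRel G s))).map_add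
    (FreeAbelianGroup.of (z₁, z₂, z₃)) (FreeAbelianGroup.of (z₂, z₁, z₃))
  rw [← this] at *
  unfold Ygen
  refine eq_neg_iff_add_eq_zero.2 ?_
  exact h

lemma Yadd1 (z₀ z₁ z₂ z₃ : G) :
    Ygen s (z₀ + z₁) z₂ z₃ = Ygen s z₀ z₂ z₃ + Ygen s z₁ z₂ z₃ := by
  have h := mk_eq_mk s (x := FreeAbelianGroup.of (z₀ + z₁, z₂, z₃))
    (y := FreeAbelianGroup.of (z₀, z₂, z₃) + FreeAbelianGroup.of (z₁, z₂, z₃))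
    (by
      have hm : (FreeAbelianGroup.of (z₀ + z₁, z₂, z₃) - FreeAbelianGroup.of (z₀, z₂, z₃)
          - FreeAbelianGroup.of (z₁, z₂, z₃)) ∈ YRel G s :=
        Or.inl (Or.inr ⟨z₀, z₁, z₂, z₃, rfl⟩)
      rw [sub_add_eq_sub_sub]
      exact AddSubgroup.subset_closure hm)
  unfold Ygen
  rw [h, map_add]
  rfl

lemma Yslide (z w : G) : Ygen s z z w = Ygen s s z w :=
  mk_eq_mk s (AddSubgroup.subset_closure (Or.inr ⟨z, w, rfl⟩))

lemma Yzero1 (z₂ z₃ : G) : Ygen s 0 z₂ z₃ = 0 := by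
  have := Yadd1 s 0 0 z₂ z₃
  rw [add_zero] at this
  have h := congrArg (fun x => x - Ygen s 0 z₂ z₃) this
  simpa using h.symm

lemma Ytwo (h2G : ∀ z : G, z + z = 0) (z₁ z₂ z₃ : G) :
    Ygen s z₁ z₂ z₃ + Ygen s z₁ z₂ z₃ = 0 := by
  rw [← Yadd1, h2G, Yzero1 s]

lemma A1two (h2G : ∀ z : G, z + z = 0) : ∀ a : A1 G s, a + a = 0 := by
  intro a
  obtain ⟨x, rfl⟩ := QuotientAddGroup.mk'_surjective (AddSubgroup.closure (YRel G s)) a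
  induction x using FreeAbelianGroup.induction_on with
  | zero => rw [map_zero]; exact add_zero (0 : A1 G s)
  | of t =>
    obtain ⟨a, b, c⟩ := t
    exact Ytwo s h2G a b c
  | neg t ih =>
    have e : ∀ b : A1 G s, b + b = 0 → -b + -b = 0 := fun b hb => by
      rw [← neg_add, hb, neg_zero]
    rw [map_neg]; exact e _ ih
  | add x y hx hy =>
    have e : ∀ b c : A1 G s, b + b = 0 → c + c = 0 → b + c + (b + c) = 0 := fun b c hb hc => by
      rw [add_add_add_comm, hb, hc, add_zero]
    rw [map_add]; exact e _ _ hx hy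

end rels

end A1B3aux
namespace A1B3aux

variable {g : ℕ}

lemma Bk1_two (z : Bk g 1) : z + z = 0 := by
  apply Subtype.ext
  funext q
  exact z2_add_self _

instance A1mod : Module (ZMod 2) (A1 (Bk g 1) (ov1B g)) :=
  AddCommGroup.zmodModule (by
    intro x
    rw [two_nsmul]
    exact A1two _ Bk1_two x)

/-- The lift of the product map to the free abelian group. -/
def gmapAux (g : ℕ) : FreeAbelianGroup ((Bk g 1) × (Bk g 1) × (Bk g 1)) →+ Bk g 3 :=
  FreeAbelianGroup.lift fun t => mul3 t.1 t.2.1 t.2.2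

lemma p1 : ∀ a b c : ZMod 2, a*b*c - b*c*a = 0 := by decide
lemma p2 : ∀ a b c : ZMod 2, a*b*c + b*a*c = 0 := by decide
lemma p3 : ∀ a b c d : ZMod 2, (a+b)*c*d - a*c*d - b*c*d = 0 := by decide
lemma p4 : ∀ a b : ZMod 2, a*a*b - 1*a*b = 0 := by decide

lemma gmapAux_vanish : ∀ x ∈ AddSubgroup.closure (YRel (Bk g 1) (ov1B g)), gmapAux g x = 0 := by
  intro x hx
  have : AddSubgroup.closure (YRel (Bk g 1) (ov1B g)) ≤ (gmapAux g).ker := by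
    apply (AddSubgroup.closure_le _).2
    rintro x (((⟨z₁, z₂, z₃, rfl⟩ | ⟨z₁, z₂, z₃, rfl⟩) | ⟨z₀, z₁, z₂, z₃, rfl⟩) | ⟨z₁, z₂, rfl⟩)
    · show gmapAux g _ = 0
      simp only [gmapAux, map_sub, map_add, FreeAbelianGroup.lift_apply_of]
      apply Subtype.ext
      funext q
      simp only [mul3, ov1B, AddSubgroupClass.coe_sub, Submodule.coe_add, Pi.sub_apply,
        Pi.add_apply, Pi.mul_apply, ZeroMemClass.coe_zero, Pi.zero_apply]
      exact p1 _ _ _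
    · show gmapAux g _ = 0
      simp only [gmapAux, map_sub, map_add, FreeAbelianGroup.lift_apply_of]
      apply Subtype.ext
      funext q
      simp only [mul3, ov1B, AddSubgroupClass.coe_sub, Submodule.coe_add, Pi.sub_apply,
        Pi.add_apply, Pi.mul_apply, ZeroMemClass.coe_zero, Pi.zero_apply]
      exact p2 _ _ _
    · show gmapAux g _ = 0
      simp only [gmapAux, map_sub, map_add, FreeAbelianGroup.lift_apply_of]
      apply Subtype.ext
      funext q
      simp only [mul3, ov1B, AddSubgroupClass.coe_sub, Submodule.coe_add, Pi.sub_apply,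
        Pi.add_apply, Pi.mul_apply, ZeroMemClass.coe_zero, Pi.zero_apply]
      exact p3 _ _ _ _
    · show gmapAux g _ = 0
      simp only [gmapAux, map_sub, map_add, FreeAbelianGroup.lift_apply_of]
      apply Subtype.ext
      funext q
      simp only [mul3, ov1B, AddSubgroupClass.coe_sub, Submodule.coe_add, Pi.sub_apply,
        Pi.add_apply, Pi.mul_apply, ZeroMemClass.coe_zero, Pi.zero_apply]
      exact p4 _ _
  exact this hx

/-- The map `γ`. -/
def gmap (g : ℕ) : A1 (Bk g 1) (ov1B g) →+ Bk g 3 :=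
  QuotientAddGroup.lift _ (gmapAux g) gmapAux_vanish

lemma gmap_Ygen (z₁ z₂ z₃ : Bk g 1) :
    gmap g (Ygen (ov1B g) z₁ z₂ z₃) = mul3 z₁ z₂ z₃ := by
  show gmapAux g (FreeAbelianGroup.of (z₁, z₂, z₃)) = _
  simp [gmapAux, FreeAbelianGroup.lift_apply_of]

end A1B3aux
namespace A1B3aux

variable {g : ℕ}

lemma Yneg (z₁ z₂ z₃ : Bk g 1) :
    -Ygen (ov1B g) z₁ z₂ z₃ = Ygen (ov1B g) z₁ z₂ z₃ :=
  neg_eq_of_add_eq_zero_left (Ytwo _ Bk1_two z₁ z₂ z₃)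

lemma Yswap12 (z₁ z₂ z₃ : Bk g 1) :
    Ygen (ov1B g) z₁ z₂ z₃ = Ygen (ov1B g) z₂ z₁ z₃ :=
  (Yanti _ z₁ z₂ z₃).trans (Yneg z₂ z₁ z₃)

lemma Yswap23 (z₁ z₂ z₃ : Bk g 1) :
    Ygen (ov1B g) z₁ z₂ z₃ = Ygen (ov1B g) z₁ z₃ z₂ := by
  rw [Ycyc, Ycyc, Yswap12]

lemma Yswap13 (z₁ z₂ z₃ : Bk g 1) :
    Ygen (ov1B g) z₁ z₂ z₃ = Ygen (ov1B g) z₃ z₂ z₁ := by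
  rw [Ycyc, Yswap12]

lemma Yzero2 (z₁ z₃ : Bk g 1) : Ygen (ov1B g) z₁ 0 z₃ = 0 := by
  rw [Yswap12, Yzero1]

lemma Yzero3 (z₁ z₂ : Bk g 1) : Ygen (ov1B g) z₁ z₂ 0 = 0 := by
  rw [Yswap13, Yzero1]

lemma Yadd2 (z₁ a b z₃ : Bk g 1) :
    Ygen (ov1B g) z₁ (a + b) z₃
      = Ygen (ov1B g) z₁ a z₃ + Ygen (ov1B g) z₁ b z₃ := by
  rw [Yswap12, Yadd1, Yswap12 a, Yswap12 b]

lemma Yadd3 (z₁ z₂ a b : Bk g 1) :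
    Ygen (ov1B g) z₁ z₂ (a + b)
      = Ygen (ov1B g) z₁ z₂ a + Ygen (ov1B g) z₁ z₂ b := by
  rw [Yswap13, Yadd1, Yswap13 a, Yswap13 b]

lemma Ysmul1 (c : ZMod 2) (z₁ z₂ z₃ : Bk g 1) :
    Ygen (ov1B g) (c • z₁) z₂ z₃ = c • Ygen (ov1B g) z₁ z₂ z₃ := by
  rcases z2_cases c with rfl | rfl
  · rw [zero_smul, zero_smul, Yzero1]
  · rw [one_smul, one_smul]

lemma Ysmul2 (c : ZMod 2) (z₁ z₂ z₃ : Bk g 1) :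
    Ygen (ov1B g) z₁ (c • z₂) z₃ = c • Ygen (ov1B g) z₁ z₂ z₃ := by
  rw [Yswap12, Ysmul1, Yswap12]

lemma Ysmul3 (c : ZMod 2) (z₁ z₂ z₃ : Bk g 1) :
    Ygen (ov1B g) z₁ z₂ (c • z₃) = c • Ygen (ov1B g) z₁ z₂ z₃ := by
  rw [Yswap13, Ysmul1, Yswap13]

/-- Basis vectors of `H2 g`. -/
def eb (i : Fin g ⊕ Fin g) : H2 g := Pi.single i 1

/-- The evaluation functions at basis vectors, as elements of `Bk g 1`. -/
def fB (i : Fin g ⊕ Fin g) : Bk g 1 :=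
  ⟨ovh g (eb i), aff_mem_Bk1 ⟨eb i, 0, by funext q; simp [ovh]⟩⟩

/-- Generating set of `Bk g 1`. -/
def S1 (g : ℕ) : Set (Bk g 1) := insert (ov1B g) (Set.range fB)

lemma q_smul (q : Om g) (c : ZMod 2) (v : H2 g) : q.1 (c • v) = c * q.1 v := by
  rcases z2_cases c with rfl | rfl
  · simp [quad_zero q]
  · simp

lemma span_S1 (z : Bk g 1) : z ∈ Submodule.span (ZMod 2) (S1 g) := by
  have key : ∀ (t : Finset (Fin g ⊕ Fin g)) (h : H2 g), (∀ i ∉ t, h i = 0) →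
      ∀ (ε : ZMod 2) (z : Bk g 1), (z : Om g → ZMod 2) = (fun q => q.1 h + ε) →
      z ∈ Submodule.span (ZMod 2) (S1 g) := by
    intro t
    induction t using Finset.induction_on with
    | empty =>
      intro h hsupp ε z hz
      have h0 : h = 0 := funext fun i => hsupp i (Finset.notMem_empty i)
      have : z = ε • ov1B g := by
        apply Subtype.ext
        rw [hz]
        funext q
        simp [h0, quad_zero q, ov1B, smul_eq_mul]
      rw [this]
      exact Submodule.smul_mem _ _ (Submodule.subset_span (Set.mem_insert _ _))
    | @insert i t hi IH =>
      intro h hsupp ε z hz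
      set h' := Function.update h i 0 with hh'
      have hd : h = h' + (h i) • eb i := by
        funext j
        by_cases hji : j = i
        · subst hji
          simp [hh', eb, Pi.single_apply, smul_eq_mul]
        · simp [hh', eb, Function.update_apply, hji, Pi.single_apply, smul_eq_mul]
      have hq : ∀ q : Om g, q.1 h = q.1 h' + (h i) * q.1 (eb i) + bsym g h' ((h i) • eb i) := by
        intro q
        conv_lhs => rw [hd]
        rw [q.2, q_smul]
      set κ := bsym g h' ((h i) • eb i) with hκ
      set z' : Bk g 1 := ⟨fun q => q.1 h' + (ε + κ), aff_mem_Bk1 ⟨h', ε + κ, rfl⟩⟩ with hz'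
      have hzz : z = z' + (h i) • fB i := by
        apply Subtype.ext
        funext q
        have := hq q
        calc (z : Om g → ZMod 2) q = q.1 h + ε := by rw [hz]
        _ = (q.1 h' + (ε + κ)) + (h i) * q.1 (eb i) := by rw [this]; ring
        _ = _ := by simp [hz', fB, ovh, smul_eq_mul]
      rw [hzz]
      refine Submodule.add_mem _ (IH h' ?_ (ε + κ) z' rfl) ?_
      · intro j hj
        by_cases hji : j = i
        · subst hji; simp [hh']
        · rw [hh', Function.update_apply, if_neg hji]
          exact hsupp j (by simp [hji, hj])
      · exact Submodule.smul_mem _ _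
          (Submodule.subset_span (Set.mem_insert_of_mem _ ⟨i, rfl⟩))
  obtain ⟨h, ε, hz⟩ := mem_Bk1 z
  exact key Finset.univ h (fun i hi => absurd (Finset.mem_univ i) hi) ε z hz

end A1B3aux
namespace A1B3aux

variable {g : ℕ}

/-- Index of basis vectors, linearly ordered. -/
def idx (i : Fin (g + g)) : Fin g ⊕ Fin g := finSumFinEquiv.symm i

/-- Basis evaluation functions indexed by `Fin (g+g)`. -/
def fB' (i : Fin (g + g)) : Bk g 1 := fB (idx i)

/-- `Y` applied to a list of at most three entries, padded with `1`s. -/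
def YofList : List (Bk g 1) → A1 (Bk g 1) (ov1B g)
  | [] => Ygen (ov1B g) (ov1B g) (ov1B g) (ov1B g)
  | [a] => Ygen (ov1B g) (ov1B g) (ov1B g) a
  | [a, b] => Ygen (ov1B g) (ov1B g) a b
  | [a, b, c] => Ygen (ov1B g) a b c
  | _ => 0

/-- Index type for the monomial basis. -/
def ιt (g : ℕ) := {T : Finset (Fin (g + g)) // T.card ≤ 3}

/-- The monomial spanning family of `A1`. -/
def bb (T : ιt g) : A1 (Bk g 1) (ov1B g) :=
  YofList ((T.1.sort (· ≤ ·)).map fB')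

/-- The submodule spanned by the monomials. -/
def MM (g : ℕ) : Submodule (ZMod 2) (A1 (Bk g 1) (ov1B g)) :=
  Submodule.span (ZMod 2) (Set.range bb)

lemma sort_pair {i j : Fin (g + g)} (h : i < j) :
    ({i, j} : Finset (Fin (g + g))).sort (· ≤ ·) = [i, j] := by
  rw [show ({i, j} : Finset (Fin (g + g))) = insert i {j} from rfl,
    Finset.sort_insert _ (by simp [le_of_lt h]) (by simp [h.ne]), Finset.sort_singleton]

lemma sort_triple {i j k : Fin (g + g)} (h1 : i < j) (h2 : j < k) :
    ({i, j, k} : Finset (Fin (g + g))).sort (· ≤ ·) = [i, j, k] := by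
  rw [show ({i, j, k} : Finset (Fin (g + g))) = insert i {j, k} from rfl,
    Finset.sort_insert _ ?_ ?_]
  · rw [sort_pair h2]
  · intro b hb
    rcases Finset.mem_insert.1 hb with rfl | hb
    · exact le_of_lt h1
    · simp at hb
      subst hb
      exact le_of_lt (h1.trans h2)
  · simp only [Finset.mem_insert, Finset.mem_singleton]
    push_neg
    exact ⟨h1.ne, (h1.trans h2).ne⟩

lemma card2 (a b : Fin (g + g)) : ({a, b} : Finset (Fin (g + g))).card ≤ 3 := by
  have h1 := Finset.card_insert_le a ({b} : Finset (Fin (g + g)))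
  simp at h1 ⊢
  omega

lemma card3 (a b c : Fin (g + g)) : ({a, b, c} : Finset (Fin (g + g))).card ≤ 3 := by
  have h1 := Finset.card_insert_le a ({b, c} : Finset (Fin (g + g)))
  have h2 := Finset.card_insert_le b ({c} : Finset (Fin (g + g)))
  simp at h1 h2 ⊢
  omega

lemma key0 : Ygen (ov1B g) (ov1B g) (ov1B g) (ov1B g) ∈ MM g :=
  Submodule.subset_span ⟨⟨∅, by simp⟩, by simp [bb, Finset.sort_empty, YofList]⟩

lemma key1 (i : Fin (g + g)) : Ygen (ov1B g) (ov1B g) (ov1B g) (fB' i) ∈ MM g :=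
  Submodule.subset_span ⟨⟨{i}, by simp⟩, by simp [bb, Finset.sort_singleton, YofList]⟩

lemma key2 (i j : Fin (g + g)) : Ygen (ov1B g) (ov1B g) (fB' i) (fB' j) ∈ MM g := by
  rcases lt_trichotomy i j with h | rfl | h
  · exact Submodule.subset_span ⟨⟨{i, j}, card2 i j⟩, by simp [bb, sort_pair h, YofList]⟩
  · rw [Ycyc, Yslide, Yswap23]
    exact key1 i
  · rw [Yswap23]
    exact Submodule.subset_span ⟨⟨{j, i}, card2 j i⟩, by simp [bb, sort_pair h, YofList]⟩

lemma key3s {i j k : Fin (g + g)} (h1 : i < j) (h2 : j < k) :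
    Ygen (ov1B g) (fB' i) (fB' j) (fB' k) ∈ MM g :=
  Submodule.subset_span ⟨⟨{i, j, k}, card3 i j k⟩, by simp [bb, sort_triple h1 h2, YofList]⟩

lemma key3 (i j k : Fin (g + g)) : Ygen (ov1B g) (fB' i) (fB' j) (fB' k) ∈ MM g := by
  by_cases hij : i = j
  · subst hij
    rw [Yslide]
    exact key2 i k
  by_cases hjk : j = k
  · subst hjk
    rw [Ycyc, Yslide]
    exact key2 j i
  by_cases hik : i = k
  · subst hik
    rw [Yswap23, Yslide]
    exact key2 i j
  rcases lt_trichotomy i j with h1 | h1 | h1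
  · rcases lt_trichotomy j k with h2 | h2 | h2
    · exact key3s h1 h2
    · exact absurd h2 hjk
    · rcases lt_trichotomy i k with h3 | h3 | h3
      · rw [Yswap23]
        exact key3s h3 h2
      · exact absurd h3 hik
      · rw [show Ygen (ov1B g) (fB' i) (fB' j) (fB' k)
            = Ygen (ov1B g) (fB' k) (fB' i) (fB' j) from (Ycyc _ _ _ _).symm]
        exact key3s h3 h1
  · exact absurd h1 hij
  · rcases lt_trichotomy i k with h3 | h3 | h3
    · rw [Yswap12]
      exact key3s h1 h3
    · exact absurd h3 hik
    · rcases lt_trichotomy j k with h2 | h2 | h2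
      · rw [Ycyc]
        exact key3s h2 h3
      · exact absurd h2 hjk
      · rw [Yswap13]
        exact key3s h2 h1
end A1B3aux
namespace A1B3aux

variable {g : ℕ}

lemma fB_eq (i : Fin g ⊕ Fin g) : fB i = fB' (finSumFinEquiv i) := by
  simp [fB', idx]

lemma baseY : ∀ z₁ ∈ S1 g, ∀ z₂ ∈ S1 g, ∀ z₃ ∈ S1 g,
    Ygen (ov1B g) z₁ z₂ z₃ ∈ MM g := by
  rintro z₁ h1 z₂ h2 z₃ h3
  rcases h1 with rfl | ⟨i, rfl⟩ <;> rcases h2 with rfl | ⟨j, rfl⟩ <;>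
    rcases h3 with rfl | ⟨k, rfl⟩
  · exact key0
  · rw [fB_eq]; exact key1 _
  · rw [Yswap23, fB_eq]; exact key1 _
  · rw [fB_eq, fB_eq]; exact key2 _ _
  · rw [Ycyc, fB_eq]; exact key1 _
  · rw [Ycyc, fB_eq, fB_eq]; exact key2 _ _
  · rw [Ycyc, Ycyc, fB_eq, fB_eq]; exact key2 _ _
  · rw [fB_eq, fB_eq, fB_eq]; exact key3 _ _ _

lemma genY (z₁ z₂ z₃ : Bk g 1) : Ygen (ov1B g) z₁ z₂ z₃ ∈ MM g := by
  have lvl3 : ∀ z₁ ∈ S1 g, ∀ z₂ ∈ S1 g, ∀ z₃, Ygen (ov1B g) z₁ z₂ z₃ ∈ MM g := by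
    intro z₁ h1 z₂ h2 z₃
    refine Submodule.span_induction (p := fun x _ => Ygen (ov1B g) z₁ z₂ x ∈ MM g)
      ?_ ?_ ?_ ?_ (span_S1 z₃)
    · intro x hx; exact baseY z₁ h1 z₂ h2 x hx
    · show Ygen (ov1B g) z₁ z₂ 0 ∈ MM g
      rw [Yzero3]; exact zero_mem _
    · intro x y _ _ hx hy
      show Ygen (ov1B g) z₁ z₂ (x + y) ∈ MM g
      rw [Yadd3]; exact add_mem hx hy
    · intro c x _ hx
      show Ygen (ov1B g) z₁ z₂ (c • x) ∈ MM g
      rw [Ysmul3]; exact Submodule.smul_mem _ _ hx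
  have lvl2 : ∀ z₁ ∈ S1 g, ∀ z₂ z₃, Ygen (ov1B g) z₁ z₂ z₃ ∈ MM g := by
    intro z₁ h1 z₂
    refine Submodule.span_induction (p := fun x _ => ∀ z₃, Ygen (ov1B g) z₁ x z₃ ∈ MM g)
      ?_ ?_ ?_ ?_ (span_S1 z₂)
    · intro x hx z₃; exact lvl3 z₁ h1 x hx z₃
    · intro z₃
      show Ygen (ov1B g) z₁ 0 z₃ ∈ MM g
      rw [Yzero2]; exact zero_mem _
    · intro x y _ _ hx hy z₃
      show Ygen (ov1B g) z₁ (x + y) z₃ ∈ MM g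
      rw [Yadd2]; exact add_mem (hx z₃) (hy z₃)
    · intro c x _ hx z₃
      show Ygen (ov1B g) z₁ (c • x) z₃ ∈ MM g
      rw [Ysmul2]; exact Submodule.smul_mem _ _ (hx z₃)
  refine Submodule.span_induction (p := fun x _ => ∀ z₂ z₃, Ygen (ov1B g) x z₂ z₃ ∈ MM g)
    ?_ ?_ ?_ ?_ (span_S1 z₁) z₂ z₃
  · intro x hx z₂ z₃; exact lvl2 x hx z₂ z₃
  · intro z₂ z₃
    show Ygen (ov1B g) 0 z₂ z₃ ∈ MM g
    rw [Yzero1]; exact zero_mem _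
  · intro x y _ _ hx hy z₂ z₃
    show Ygen (ov1B g) (x + y) z₂ z₃ ∈ MM g
    rw [Yadd1]; exact add_mem (hx z₂ z₃) (hy z₂ z₃)
  · intro c x _ hx z₂ z₃
    show Ygen (ov1B g) (c • x) z₂ z₃ ∈ MM g
    rw [Ysmul1]; exact Submodule.smul_mem _ _ (hx z₂ z₃)

lemma A1span (a : A1 (Bk g 1) (ov1B g)) : a ∈ MM g := by
  obtain ⟨x, rfl⟩ := QuotientAddGroup.mk'_surjective _ a
  induction x using FreeAbelianGroup.induction_on with
  | zero => exact (by rw [map_zero]; exact zero_mem _)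
  | of t =>
    obtain ⟨a, b, c⟩ := t
    exact genY a b c
  | neg t ih => rw [map_neg]; exact neg_mem ih
  | add x y hx hy => rw [map_add]; exact add_mem hx hy

end A1B3aux
namespace A1B3aux

variable {g : ℕ}

/-- A reference quadratic refinement. -/
def q0f (g : ℕ) : H2 g → ZMod 2 := fun a => ∑ i : Fin g, a (Sum.inl i) * a (Sum.inr i)

lemma q0f_quad : IsQuad g (q0f g) := by
  intro a b
  unfold q0f bsym
  rw [← Finset.sum_add_distrib, ← Finset.sum_add_distrib]
  refine Finset.sum_congr rfl fun i _ => by simp [Pi.add_apply]; ring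

/-- The swap on the index set. -/
def swp : Fin g ⊕ Fin g → Fin g ⊕ Fin g := Sum.elim Sum.inr Sum.inl

/-- Characteristic vector realizing prescribed basis values. -/
def cvec (S : Finset (Fin (g + g))) : H2 g :=
  fun j => if finSumFinEquiv (swp j) ∈ S then 1 else 0

lemma bsym_eb_inl (c : H2 g) (a : Fin g) : bsym g c (eb (Sum.inl a)) = c (Sum.inr a) := by
  unfold bsym eb
  rw [Finset.sum_eq_single a]
  · simp
  · intro b _ hb
    simp [Pi.single_apply, hb, Ne.symm hb]
  · simp

lemma bsym_eb_inr (c : H2 g) (a : Fin g) : bsym g c (eb (Sum.inr a)) = c (Sum.inl a) := by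
  unfold bsym eb
  rw [Finset.sum_eq_single a]
  · simp
  · intro b _ hb
    simp [Pi.single_apply, hb, Ne.symm hb]
  · simp

lemma q0f_eb (x : Fin g ⊕ Fin g) : q0f g (eb x) = 0 := by
  rcases x with a | a <;>
  · unfold q0f eb
    apply Finset.sum_eq_zero
    intro i _
    simp [Pi.single_apply]

/-- Quadratic refinement with prescribed values on the basis. -/
def qpt (S : Finset (Fin (g + g))) : Om g :=
  ⟨fun a => q0f g a + bsym g (cvec S) a, by
    intro a b
    dsimp only
    rw [q0f_quad a b, bsym_add_right]
    ring⟩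

lemma qpt_eb (S : Finset (Fin (g + g))) (i : Fin (g + g)) :
    (qpt S).1 (eb (idx i)) = if i ∈ S then 1 else 0 := by
  show q0f g (eb (idx i)) + bsym g (cvec S) (eb (idx i)) = _
  rw [q0f_eb, zero_add]
  have hi : finSumFinEquiv (idx (g := g) i) = i := Equiv.apply_symm_apply _ _
  rcases hidx : idx (g := g) i with a | a
  · rw [bsym_eb_inl]
    show (if finSumFinEquiv (swp (Sum.inr a)) ∈ S then (1 : ZMod 2) else 0) = _
    rw [show swp (Sum.inr a) = Sum.inl a from rfl, ← hidx, hi]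
  · rw [bsym_eb_inr]
    show (if finSumFinEquiv (swp (Sum.inl a)) ∈ S then (1 : ZMod 2) else 0) = _
    rw [show swp (Sum.inl a) = Sum.inr a from rfl, ← hidx, hi]

/-- The monomial functions. -/
def Fm (i : Fin (g + g)) : Om g → ZMod 2 := ovh g (eb (idx i))

lemma coe_fB' (i : Fin (g + g)) : (fB' i : Om g → ZMod 2) = Fm i := rfl

lemma coe_ov1B : ((ov1B g : Bk g 1) : Om g → ZMod 2) = fun _ => 1 := rfl

lemma gmap_bb (T : ιt g) :
    ((gmap g (bb T) : Bk g 3) : Om g → ZMod 2) = ∏ i ∈ T.1, Fm i := by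
  have hlen : (T.1.sort (· ≤ ·)).length ≤ 3 := by
    rw [Finset.length_sort]; exact T.2
  have hprod : ∏ i ∈ T.1, Fm i = ((T.1.sort (· ≤ ·)).map Fm).prod := by
    rw [Finset.prod_eq_multiset_prod, ← Finset.sort_eq (r := (· ≤ ·)) (s := T.1), Multiset.map_coe,
      Multiset.prod_coe]
  rw [hprod]
  unfold bb
  rcases hl : T.1.sort (· ≤ ·) with _ | ⟨a, _ | ⟨b, _ | ⟨c, _ | ⟨d, tl⟩⟩⟩⟩ <;>
    simp only [List.map_cons, List.map_nil]
  · show ((gmap g (YofList []) : Bk g 3) : Om g → ZMod 2) = _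
    rw [show YofList ([] : List (Bk g 1)) = Ygen (ov1B g) (ov1B g) (ov1B g) (ov1B g) from rfl,
      gmap_Ygen]
    show ((ov1B g : Bk g 1) : Om g → ZMod 2) * _ * _ = _
    funext q
    simp [coe_ov1B]
  · rw [show YofList [fB' a] = Ygen (ov1B g) (ov1B g) (ov1B g) (fB' a) from rfl, gmap_Ygen]
    show ((ov1B g : Bk g 1) : Om g → ZMod 2) * _ * _ = _
    funext q
    simp [coe_ov1B, coe_fB']
  · rw [show YofList [fB' a, fB' b] = Ygen (ov1B g) (ov1B g) (fB' a) (fB' b) from rfl, gmap_Ygen]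
    show ((ov1B g : Bk g 1) : Om g → ZMod 2) * _ * _ = _
    funext q
    simp [coe_ov1B, coe_fB', mul_assoc]
  · rw [show YofList [fB' a, fB' b, fB' c] = Ygen (ov1B g) (fB' a) (fB' b) (fB' c) from rfl,
      gmap_Ygen]
    show ((fB' a : Bk g 1) : Om g → ZMod 2) * _ * _ = _
    funext q
    simp [coe_fB', mul_assoc]
  · exfalso
    rw [hl] at hlen
    simp at hlen
    omega

lemma Fm_qpt (i : Fin (g + g)) (S : Finset (Fin (g + g))) :
    Fm i (qpt S) = if i ∈ S then 1 else 0 := qpt_eb S i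

lemma indep_mon : LinearIndependent (ZMod 2) fun T : ιt g => ∏ i ∈ T.1, Fm i := by
  rw [linearIndependent_iff']
  intro s gco hsum
  have key : ∀ m : ℕ, ∀ T ∈ s, T.1.card = m → gco T = 0 := by
    intro m
    induction m using Nat.strong_induction_on with
    | _ m IH =>
      intro T hT hc
      have h0 := congrFun hsum (qpt T.1)
      rw [Finset.sum_apply, Pi.zero_apply] at h0
      have hev2 : ∑ j ∈ s, (if j.1 ⊆ T.1 then gco j else 0) = 0 := by
        refine Eq.trans (Finset.sum_congr rfl fun j _ => ?_) h0
        rw [Pi.smul_apply, Finset.prod_apply, smul_eq_mul]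
        have hprodj : ∏ i ∈ j.1, Fm i (qpt T.1) = if j.1 ⊆ T.1 then 1 else 0 := by
          by_cases hsub : j.1 ⊆ T.1
          · rw [if_pos hsub]
            exact Finset.prod_eq_one fun i hi => by rw [Fm_qpt, if_pos (hsub hi)]
          · rw [if_neg hsub]
            obtain ⟨i, hiT, hiS⟩ := Finset.not_subset.1 hsub
            exact Finset.prod_eq_zero hiT (by rw [Fm_qpt, if_neg hiS])
        rw [hprodj]
        split <;> simp
      rw [Finset.sum_eq_single T] at hev2
      · rwa [if_pos (Finset.Subset.refl T.1)] at hev2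
      · intro j hj hjT
        by_cases hsub : j.1 ⊆ T.1
        · rw [if_pos hsub]
          have hne : j.1 ≠ T.1 := fun h => hjT (Subtype.ext h)
          have hlt : j.1.card < m := by
            rw [← hc]
            exact Finset.card_lt_card (lt_of_le_of_ne hsub hne)
          exact IH _ hlt j hj rfl
        · rw [if_neg hsub]
      · intro hTs
        exact absurd hT hTs
  exact fun T hT => key T.1.card T hT rfl

end A1B3aux
namespace A1B3aux

variable {g : ℕ}

lemma hind : LinearIndependent (ZMod 2) fun T : ιt g => gmap g (bb T) := by
  apply LinearIndependent.of_comp (Bk g 3).subtype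
  have he : ((Bk g 3).subtype ∘ fun T : ιt g => gmap g (bb T))
      = fun T : ιt g => ∏ i ∈ T.1, Fm i := funext fun T => gmap_bb T
  rw [he]
  exact indep_mon

lemma hinj : Function.Injective (gmap g) := by
  have hker : ∀ x, gmap g x = 0 → x = 0 := by
    intro x hx
    obtain ⟨c, hc⟩ := Finsupp.mem_span_range_iff_exists_finsupp.1 (A1span x)
    have h2 : (Finsupp.linearCombination (ZMod 2) fun T : ιt g => gmap g (bb T)) c = 0 := by
      rw [Finsupp.linearCombination_apply]
      have h3 := congrArg (gmap g) hc
      rw [hx, map_finsuppSum] at h3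
      rw [← h3]
      exact Finsupp.sum_congr fun i _ => (ZMod.map_smul (gmap g) (c i) (bb i)).symm
    have hc0 := linearIndependent_iff.1 hind c h2
    rw [hc0] at hc
    rw [← hc]
    simp
  intro a b hab
  have := hker (a - b) (by rw [map_sub, hab, sub_self])
  exact sub_eq_zero.1 this

lemma hsurj : Function.Surjective (gmap g) := by
  intro y
  suffices h : (y : Om g → ZMod 2) ∈
      LinearMap.range ((Bk g 3).subtype.comp ((gmap g).toZModLinearMap 2)) by
    obtain ⟨a, ha⟩ := h
    exact ⟨a, Subtype.ext ha⟩
  have hle : Bk g 3 ≤ LinearMap.range ((Bk g 3).subtype.comp ((gmap g).toZModLinearMap 2)) := by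
    apply Submodule.span_le.2
    rintro f ⟨l, hl, hmem, rfl⟩
    match l, hl, hmem with
    | [], _, _ =>
      refine ⟨Ygen (ov1B g) (ov1B g) (ov1B g) (ov1B g), ?_⟩
      show ((gmap g (Ygen (ov1B g) (ov1B g) (ov1B g) (ov1B g)) : Bk g 3) : Om g → ZMod 2) = _
      rw [gmap_Ygen]
      funext q
      simp [mul3, coe_ov1B]
    | [a], _, hmem =>
      refine ⟨Ygen (ov1B g) (ov1B g) (ov1B g) ⟨a, aff_mem_Bk1 (hmem a (by simp))⟩, ?_⟩
      show ((gmap g (Ygen (ov1B g) (ov1B g) (ov1B g) _) : Bk g 3) : Om g → ZMod 2) = _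
      rw [gmap_Ygen]
      funext q
      simp [mul3, coe_ov1B]
    | [a, b], _, hmem =>
      refine ⟨Ygen (ov1B g) (ov1B g) ⟨a, aff_mem_Bk1 (hmem a (by simp))⟩
        ⟨b, aff_mem_Bk1 (hmem b (by simp))⟩, ?_⟩
      show ((gmap g (Ygen (ov1B g) (ov1B g) _ _) : Bk g 3) : Om g → ZMod 2) = _
      rw [gmap_Ygen]
      funext q
      simp [mul3, coe_ov1B, mul_assoc]
    | [a, b, c], _, hmem =>
      refine ⟨Ygen (ov1B g) ⟨a, aff_mem_Bk1 (hmem a (by simp))⟩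
        ⟨b, aff_mem_Bk1 (hmem b (by simp))⟩ ⟨c, aff_mem_Bk1 (hmem c (by simp))⟩, ?_⟩
      show ((gmap g (Ygen (ov1B g) _ _ _) : Bk g 3) : Om g → ZMod 2) = _
      rw [gmap_Ygen]
      funext q
      simp [mul3, mul_assoc]
  exact hle y.2

end A1B3aux

/-- The map `γ : A_1(B_g^{(1)}, \overline{1}) → B_g^{(3)}` given by multiplying the three
labels, `Y[z₁,z₂,z₃] ↦ z₁z₂z₃`, is a well-defined isomorphism of abelian groups. -/
theorem A1_B1_iso_B3 (g : ℕ) :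
    ∃ e : A1 (Bk g 1) (ov1B g) ≃+ Bk g 3,
      ∀ z₁ z₂ z₃ : Bk g 1,
        ((e (Ygen (ov1B g) z₁ z₂ z₃) : Bk g 3) : Om g → ZMod 2)
          = (z₁ : Om g → ZMod 2) * (z₂ : Om g → ZMod 2) * (z₃ : Om g → ZMod 2) := by
  refine ⟨AddEquiv.ofBijective (A1B3aux.gmap g) ⟨A1B3aux.hinj, A1B3aux.hsurj⟩, ?_⟩
  intro z₁ z₂ z₃
  show ((A1B3aux.gmap g (Ygen (ov1B g) z₁ z₂ z₃) : Bk g 3) : Om g → ZMod 2) = _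
  rw [A1B3aux.gmap_Ygen]
  rfl
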